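/- arXiv:2301.08960 — 2 statements merged into one kernel-verified Lean document; each statement's English description precedes it below -/
import Mathlib

section
/- Let p be a prime with p ≡ 1 (mod 6) and write p₁ = (p-1)/6. Then every integer n with 6n+1 ≢ 0 (mod p) can be written uniquely in exactly one of the two forms: (i) n = p(2pm + ℓ₁) + a + p₁ with 1 ≤ a ≤ (p-1)/2, 0 ≤ ℓ₁ < 2p, m ∈ ℤ; or (ii) n = p(-2pm - ℓ₁) - a + p₁ with 1 ≤ a ≤ (p-1)/2, 1 ≤ ℓ₁ ≤ 2p, m ∈ ℤ. -/
private lemma key_small (P d c : ℤ) (hP : 0 < P) (h : P * d = c)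
    (hc : -P < c) (hc' : c < P) : d = 0 := by
  by_contra hdz
  have h1 : 1 ≤ |d| := Int.one_le_abs hdz
  have h2 : P ≤ |c| := by
    calc P = P * 1 := (mul_one P).symm
    _ ≤ P * |d| := mul_le_mul_of_nonneg_left h1 hP.le
    _ = |P * d| := by rw [abs_mul, abs_of_pos hP]
    _ = |c| := by rw [h]
  rcases abs_cases c with ⟨he, _⟩ | ⟨he, _⟩ <;> omega

private lemma uniq_aux (P p₁ n : ℤ) (hP : 7 ≤ P)
    (t1 t2 : (ℤ × ℤ × ℤ) ⊕ (ℤ × ℤ × ℤ))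
    (H1 : Sum.elim
        (fun x : ℤ × ℤ × ℤ =>
          1 ≤ x.1 ∧ x.1 ≤ (P - 1) / 2 ∧ 0 ≤ x.2.1 ∧ x.2.1 < 2 * P ∧
            n = P * (2 * P * x.2.2 + x.2.1) + x.1 + p₁)
        (fun x : ℤ × ℤ × ℤ =>
          1 ≤ x.1 ∧ x.1 ≤ (P - 1) / 2 ∧ 1 ≤ x.2.1 ∧ x.2.1 ≤ 2 * P ∧
            n = P * (-(2 * P * x.2.2) - x.2.1) - x.1 + p₁) t1)
    (H2 : Sum.elim
        (fun x : ℤ × ℤ × ℤ =>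
          1 ≤ x.1 ∧ x.1 ≤ (P - 1) / 2 ∧ 0 ≤ x.2.1 ∧ x.2.1 < 2 * P ∧
            n = P * (2 * P * x.2.2 + x.2.1) + x.1 + p₁)
        (fun x : ℤ × ℤ × ℤ =>
          1 ≤ x.1 ∧ x.1 ≤ (P - 1) / 2 ∧ 1 ≤ x.2.1 ∧ x.2.1 ≤ 2 * P ∧
            n = P * (-(2 * P * x.2.2) - x.2.1) - x.1 + p₁) t2) :
    t1 = t2 := by
  have hP0 : (0:ℤ) < P := by omega
  obtain (⟨a, l, m⟩ | ⟨a, l, m⟩) := t1 <;> obtain (⟨a', l', m'⟩ | ⟨a', l', m'⟩) := t2 <;>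
    simp only [Sum.elim_inl, Sum.elim_inr] at H1 H2
  · obtain ⟨h1a, h1b, h1c, h1d, h1e⟩ := H1
    obtain ⟨h2a, h2b, h2c, h2d, h2e⟩ := H2
    have hd : P * ((2 * P * m + l) - (2 * P * m' + l')) = a' - a := by
      linear_combination h2e - h1e
    have hz : (2 * P * m + l) - (2 * P * m' + l') = 0 :=
      key_small P _ _ hP0 hd (by omega) (by omega)
    have ha : a = a' := by
      have : a' - a = 0 := by rw [← hd, hz, mul_zero]
      omega
    have hd2 : 2 * P * (m - m') = l' - l := by linear_combination hz
    have hz2 : m - m' = 0 :=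
      key_small (2 * P) _ _ (by omega) hd2 (by omega) (by omega)
    have hl : l = l' := by
      have : l' - l = 0 := by rw [← hd2, hz2, mul_zero]
      omega
    have hm : m = m' := by omega
    simp [ha, hl, hm]
  · obtain ⟨h1a, h1b, h1c, h1d, h1e⟩ := H1
    obtain ⟨h2a, h2b, h2c, h2d, h2e⟩ := H2
    have hd : P * ((2 * P * m + l) - (-(2 * P * m') - l')) = -(a' + a) := by
      linear_combination h2e - h1e
    have hz := key_small P _ _ hP0 hd (by omega) (by omega)
    have : -(a' + a) = 0 := by rw [← hd, hz, mul_zero]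
    omega
  · obtain ⟨h1a, h1b, h1c, h1d, h1e⟩ := H1
    obtain ⟨h2a, h2b, h2c, h2d, h2e⟩ := H2
    have hd : P * ((-(2 * P * m) - l) - (2 * P * m' + l')) = a' + a := by
      linear_combination h2e - h1e
    have hz := key_small P _ _ hP0 hd (by omega) (by omega)
    have : a' + a = 0 := by rw [← hd, hz, mul_zero]
    omega
  · obtain ⟨h1a, h1b, h1c, h1d, h1e⟩ := H1
    obtain ⟨h2a, h2b, h2c, h2d, h2e⟩ := H2
    have hd : P * ((-(2 * P * m) - l) - (-(2 * P * m') - l')) = a - a' := by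
      linear_combination h2e - h1e
    have hz : (-(2 * P * m) - l) - (-(2 * P * m') - l') = 0 :=
      key_small P _ _ hP0 hd (by omega) (by omega)
    have ha : a = a' := by
      have : a - a' = 0 := by rw [← hd, hz, mul_zero]
      omega
    have hd2 : 2 * P * (m' - m) = l - l' := by linear_combination hz
    have hz2 : m' - m = 0 :=
      key_small (2 * P) _ _ (by omega) hd2 (by omega) (by omega)
    have hl : l = l' := by
      have : l - l' = 0 := by rw [← hd2, hz2, mul_zero]
      omega
    have hm : m = m' := by omega
    simp [ha, hl, hm]

/-- CASE `p ≡ 1 (mod 6)`: every integer `n` with `6n+1 ≢ 0 (mod p)` can be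
written uniquely in exactly one of the two forms
(i)  `n = p(2pm + ℓ₁) + a + p₁` with `1 ≤ a ≤ (p-1)/2`, `0 ≤ ℓ₁ < 2p`, `m ∈ ℤ`,
(ii) `n = p(-2pm - ℓ₁) - a + p₁` with `1 ≤ a ≤ (p-1)/2`, `1 ≤ ℓ₁ ≤ 2p`, `m ∈ ℤ`,
where `p₁ = (p-1)/6`.  A triple `(a, ℓ₁, m)` together with the choice of form is
recorded as an element of `(ℤ × ℤ × ℤ) ⊕ (ℤ × ℤ × ℤ)`. -/
theorem unique_param_mod6_one (p : ℕ) (hp : p.Prime) (h6 : (p : ℤ) % 6 = 1)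
    (p₁ : ℤ) (hp₁ : p₁ = ((p : ℤ) - 1) / 6)
    (n : ℤ) (hn : ¬ ((p : ℤ) ∣ (6 * n + 1))) :
    ∃! t : (ℤ × ℤ × ℤ) ⊕ (ℤ × ℤ × ℤ),
      Sum.elim
        (fun x : ℤ × ℤ × ℤ =>
          1 ≤ x.1 ∧ x.1 ≤ ((p : ℤ) - 1) / 2 ∧ 0 ≤ x.2.1 ∧ x.2.1 < 2 * (p : ℤ) ∧
            n = (p : ℤ) * (2 * (p : ℤ) * x.2.2 + x.2.1) + x.1 + p₁)
        (fun x : ℤ × ℤ × ℤ =>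
          1 ≤ x.1 ∧ x.1 ≤ ((p : ℤ) - 1) / 2 ∧ 1 ≤ x.2.1 ∧ x.2.1 ≤ 2 * (p : ℤ) ∧
            n = (p : ℤ) * (-(2 * (p : ℤ) * x.2.2) - x.2.1) - x.1 + p₁) t := by
  have h2 : (2:ℤ) ≤ (p:ℤ) := by exact_mod_cast hp.two_le
  have hP7 : (7:ℤ) ≤ (p:ℤ) := by omega
  have hP0 : (0:ℤ) < (p:ℤ) := by omega
  have h6p₁ : 6 * p₁ = (p:ℤ) - 1 := by omega
  have hrnd : ¬ (p:ℤ) ∣ (n - p₁) := by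
    rintro ⟨k, hk⟩
    exact hn ⟨6 * k + 1, by linear_combination 6 * hk + h6p₁⟩
  have ha0 : 0 ≤ (n - p₁) % (p:ℤ) := Int.emod_nonneg _ (by omega)
  have ha0' : (n - p₁) % (p:ℤ) < (p:ℤ) := Int.emod_lt_of_pos _ hP0
  have hqa : (p:ℤ) * ((n - p₁) / (p:ℤ)) + (n - p₁) % (p:ℤ) = n - p₁ :=
    Int.mul_ediv_add_emod _ _
  have ha0nz : (n - p₁) % (p:ℤ) ≠ 0 := fun h => hrnd (Int.dvd_of_emod_eq_zero h)
  by_cases hcase : (n - p₁) % (p:ℤ) ≤ ((p:ℤ) - 1) / 2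
  · have em2 : 2 * (p:ℤ) * (((n - p₁) / (p:ℤ)) / (2 * (p:ℤ)))
        + ((n - p₁) / (p:ℤ)) % (2 * (p:ℤ)) = (n - p₁) / (p:ℤ) :=
      Int.mul_ediv_add_emod _ _
    have hkey : 1 ≤ (n - p₁) % (p:ℤ) ∧ (n - p₁) % (p:ℤ) ≤ ((p:ℤ) - 1) / 2 ∧
        0 ≤ ((n - p₁) / (p:ℤ)) % (2 * (p:ℤ)) ∧
        ((n - p₁) / (p:ℤ)) % (2 * (p:ℤ)) < 2 * (p:ℤ) ∧
        n = (p:ℤ) * (2 * (p:ℤ) * (((n - p₁) / (p:ℤ)) / (2 * (p:ℤ)))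
              + ((n - p₁) / (p:ℤ)) % (2 * (p:ℤ))) + (n - p₁) % (p:ℤ) + p₁ := by
      refine ⟨by omega, hcase, Int.emod_nonneg _ (by omega),
        Int.emod_lt_of_pos _ (by omega), ?_⟩
      linear_combination (-(p:ℤ)) * em2 - hqa
    exact ⟨Sum.inl ((n - p₁) % (p:ℤ), ((n - p₁) / (p:ℤ)) % (2 * (p:ℤ)),
        ((n - p₁) / (p:ℤ)) / (2 * (p:ℤ))), hkey,
      fun y hy => uniq_aux (p:ℤ) p₁ n hP7 y _ hy hkey⟩
  · have em2 : 2 * (p:ℤ) * ((-((n - p₁) / (p:ℤ)) - 2) / (2 * (p:ℤ)))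
        + (-((n - p₁) / (p:ℤ)) - 2) % (2 * (p:ℤ)) = -((n - p₁) / (p:ℤ)) - 2 :=
      Int.mul_ediv_add_emod _ _
    have hl1 : 0 ≤ (-((n - p₁) / (p:ℤ)) - 2) % (2 * (p:ℤ)) :=
      Int.emod_nonneg _ (by omega)
    have hl2 : (-((n - p₁) / (p:ℤ)) - 2) % (2 * (p:ℤ)) < 2 * (p:ℤ) :=
      Int.emod_lt_of_pos _ (by omega)
    have hkey : 1 ≤ (p:ℤ) - (n - p₁) % (p:ℤ) ∧
        (p:ℤ) - (n - p₁) % (p:ℤ) ≤ ((p:ℤ) - 1) / 2 ∧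
        1 ≤ (-((n - p₁) / (p:ℤ)) - 2) % (2 * (p:ℤ)) + 1 ∧
        (-((n - p₁) / (p:ℤ)) - 2) % (2 * (p:ℤ)) + 1 ≤ 2 * (p:ℤ) ∧
        n = (p:ℤ) * (-(2 * (p:ℤ) * ((-((n - p₁) / (p:ℤ)) - 2) / (2 * (p:ℤ))))
              - ((-((n - p₁) / (p:ℤ)) - 2) % (2 * (p:ℤ)) + 1))
            - ((p:ℤ) - (n - p₁) % (p:ℤ)) + p₁ := by
      refine ⟨by omega, by omega, by omega, by omega, ?_⟩
      linear_combination (p:ℤ) * em2 - hqa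
    exact ⟨Sum.inr ((p:ℤ) - (n - p₁) % (p:ℤ),
        (-((n - p₁) / (p:ℤ)) - 2) % (2 * (p:ℤ)) + 1,
        (-((n - p₁) / (p:ℤ)) - 2) / (2 * (p:ℤ))), hkey,
      fun y hy => uniq_aux (p:ℤ) p₁ n hP7 y _ hy hkey⟩
end

section
/- Let p > 3 be prime and let 1 ≤ ℓ, ℓ' ≤ (p-1)/2 and 1 ≤ a, d ≤ p-1 with ad ≡ 1 (mod p) (more precisely, with ℓ' ≡ ±aℓ (mod p)). Then sin(6ℓπ/p) = (-1)^{ℓ' + aℓ + ⌊aℓ/p⌋} · sin(6ℓ'dπ/p). -/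
open Real

/-- Lemma: for `p > 3` prime, `1 ≤ a, d ≤ p-1` with `ad ≡ 1 (mod p)`, and
`1 ≤ ℓ, ℓ' ≤ (p-1)/2` with `ℓ' ≡ ±aℓ (mod p)`, one has
`sin(6ℓπ/p) = (-1)^{ℓ' + aℓ + ⌊aℓ/p⌋} sin(6ℓ'dπ/p)`. -/
theorem sin_symmetry (p a d l l' : ℤ) (hp : Prime p) (hp3 : 3 < p)
    (ha : 1 ≤ a) (ha' : a ≤ p - 1) (hd : 1 ≤ d) (hd' : d ≤ p - 1)
    (had : a * d ≡ 1 [ZMOD p])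
    (hl : 1 ≤ l) (hl' : l ≤ (p - 1) / 2)
    (hl2 : 1 ≤ l') (hl2' : l' ≤ (p - 1) / 2)
    (hll : l' ≡ a * l [ZMOD p] ∨ l' ≡ -(a * l) [ZMOD p]) :
    Real.sin (6 * l * π / p) =
      (-1 : ℝ) ^ (l' + a * l + (a * l) / p) * Real.sin (6 * l' * d * π / p) := by
  have hp0 : p ≠ 0 := by omega
  have hpR : (p : ℝ) ≠ 0 := by exact_mod_cast hp0
  -- p is odd
  have hodd : p % 2 = 1 := by
    have h1 : Nat.Prime p.natAbs := Int.prime_iff_natAbs_prime.mp (by simpa using hp)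
    have h2 : p.natAbs ≠ 2 := by omega
    have := h1.odd_of_ne_two h2
    have := Nat.odd_iff.mp this
    omega
  obtain ⟨s, hs⟩ : ∃ s, p + 1 = 2 * s := ⟨(p + 1) / 2, by omega⟩
  have hl'p : l' < p := by omega
  rcases hll with hll1 | hll2
  · -- case l' ≡ a*l
    obtain ⟨m, hm⟩ := hll1.dvd  -- a*l - l' = p*m
    have hal : a * l = l' + m * p := by linear_combination hm
    have h0 : l' / p = 0 := Int.ediv_eq_zero_of_lt (by omega) hl'p
    have hdiv : (a * l) / p = m := by
      rw [hal, Int.add_mul_ediv_right _ _ hp0, h0, zero_add]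
    have heven : Even (l' + a * l + (a * l) / p) :=
      ⟨l' + m * s, by rw [hdiv, hal]; linear_combination m * hs⟩
    rw [heven.neg_one_zpow, one_mul]
    -- l'*d ≡ l (mod p)
    have h1 : l' * d ≡ a * l * d [ZMOD p] := hll1.mul_right d
    have h2 : a * l * d ≡ l [ZMOD p] := by
      have := had.mul_left l
      simpa [mul_comm, mul_assoc, mul_left_comm] using this
    obtain ⟨k, hk⟩ := (h1.trans h2).dvd  -- l - l'*d = p*k
    have hkR : (l' : ℝ) * d = l - p * k := by
      have : (l' : ℤ) * d = l - p * k := by linear_combination -hk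
      exact_mod_cast congrArg (fun z : ℤ => (z : ℝ)) this
    have harg : (6 * (l' : ℝ) * d * π / p) = 6 * l * π / p + ((-3 * k : ℤ) : ℝ) * (2 * π) := by
      push_cast
      field_simp
      linear_combination 6 * hkR
    rw [harg, Real.sin_add_int_mul_two_pi]
  · -- case l' ≡ -(a*l)
    obtain ⟨c, hc⟩ := hll2.dvd  -- -(a*l) - l' = p*c
    obtain ⟨m, hm⟩ : ∃ m, a * l + l' = p * m := ⟨-c, by linear_combination -hc⟩
    have h0 : (p - l') / p = 0 := Int.ediv_eq_zero_of_lt (by omega) (by omega)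
    have hdiv : (a * l) / p = m - 1 := by
      rw [show a * l = (p - l') + (m - 1) * p from by linear_combination hm,
        Int.add_mul_ediv_right _ _ hp0, h0, zero_add]
    have hoddE : Odd (l' + a * l + (a * l) / p) :=
      ⟨m * s - 1, by rw [hdiv]; linear_combination hm + m * hs⟩
    rw [hoddE.neg_one_zpow]
    -- l'*d ≡ -l (mod p)
    have h1 : l' * d ≡ -(a * l) * d [ZMOD p] := hll2.mul_right d
    have h2 : -(a * l) * d ≡ -l [ZMOD p] := by
      have := (had.mul_left l).neg
      simpa [mul_comm, mul_assoc, mul_left_comm] using this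
    obtain ⟨k, hk⟩ := (h1.trans h2).dvd  -- -l - l'*d = p*k
    have hkR : (l' : ℝ) * d = -l - p * k := by
      have : (l' : ℤ) * d = -l - p * k := by linear_combination -hk
      exact_mod_cast congrArg (fun z : ℤ => (z : ℝ)) this
    have harg : (6 * (l' : ℝ) * d * π / p) = -(6 * l * π / p) + ((-3 * k : ℤ) : ℝ) * (2 * π) := by
      push_cast
      field_simp
      linear_combination 6 * hkR
    rw [harg, Real.sin_add_int_mul_two_pi, Real.sin_neg]
    ring
end
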